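/- Every anonymous hedonic game satisfying the equal-preference condition (all agents have the same strict ranking of coalition sizes) has a nonempty core: the partition constructed by repeatedly forming a coalition of the commonly most-preferred feasible size among the remaining agents is core stable. -/
import Mathlib


open Finset

variable {α : Type*}

/-- `GreedySizeChain gt L rem`: the list `L` of coalitions is obtained by
repeatedly forming a coalition of the commonly most `gt`-preferred feasible size
among the remaining agents `rem`, until no agent remains. -/
def GreedySizeChain [DecidableEq α] (gt : ℕ → ℕ → Prop) :
    List (Finset α) → Finset α → Prop
  | [], rem => rem = ∅
  | T :: L, rem => T ⊆ rem ∧ T.Nonempty ∧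
      (∀ s : ℕ, 1 ≤ s → s ≤ rem.card → s ≠ T.card → gt T.card s) ∧
      GreedySizeChain gt L (rem \ T)

/-- Core stability for an anonymous hedonic game with common strict size
ranking `gt`. -/
def CoreStableAnon (gt : ℕ → ℕ → Prop) (π : Finset (Finset α)) : Prop :=
  ¬ ∃ S : Finset α, S.Nonempty ∧ ∀ i ∈ S, ∀ T ∈ π, i ∈ T → gt S.card T.card

lemma exists_best (gt : ℕ → ℕ → Prop) (htrans : Transitive gt) :
    ∀ (F : Finset ℕ), F.Nonempty →
      (∀ s ∈ F, ∀ t ∈ F, s ≠ t → gt s t ∨ gt t s) →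
      ∃ s ∈ F, ∀ t ∈ F, t ≠ s → gt s t := by
  intro F
  induction F using Finset.induction_on with
  | empty => intro h; exact absurd h (by simp)
  | @insert a F ha ih =>
    intro _ htot
    rcases F.eq_empty_or_nonempty with rfl | hF
    · exact ⟨a, by simp, by simp⟩
    · obtain ⟨b, hbF, hb⟩ := ih hF (fun s hs t ht => htot s (Finset.mem_insert_of_mem hs)
        t (Finset.mem_insert_of_mem ht))
      have hab : a ≠ b := fun h => ha (h ▸ hbF)
      rcases htot a (Finset.mem_insert_self _ _) b (Finset.mem_insert_of_mem hbF) hab with h | h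
      · refine ⟨a, Finset.mem_insert_self _ _, ?_⟩
        intro t ht hta
        rcases Finset.mem_insert.1 ht with rfl | htF
        · exact absurd rfl hta
        · by_cases htb : t = b
          · exact htb ▸ h
          · exact htrans h (hb t htF htb)
      · refine ⟨b, Finset.mem_insert_of_mem hbF, ?_⟩
        intro t ht htb
        rcases Finset.mem_insert.1 ht with rfl | htF
        · exact h
        · exact hb t htF htb

lemma chain_exists [Fintype α] [DecidableEq α] (gt : ℕ → ℕ → Prop)
    (htrans : Transitive gt)
    (htotal : ∀ s t : ℕ, 1 ≤ s → s ≤ Fintype.card α → 1 ≤ t → t ≤ Fintype.card α →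
      s ≠ t → gt s t ∨ gt t s) :
    ∀ rem : Finset α, ∃ L, GreedySizeChain gt L rem := by
  intro rem
  induction rem using Finset.strongInductionOn with
  | _ rem ih =>
  rcases rem.eq_empty_or_nonempty with rfl | hrem
  · exact ⟨[], rfl⟩
  · have hc1 : 1 ≤ rem.card := Finset.card_pos.2 hrem
    have hIcc : (Finset.Icc 1 rem.card).Nonempty := ⟨1, by simp [hc1]⟩
    obtain ⟨s, hsF, hbest⟩ := exists_best gt htrans (Finset.Icc 1 rem.card) hIcc
      (by
        intro x hx y hy hxy
        simp only [Finset.mem_Icc] at hx hy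
        exact htotal x y hx.1 (hx.2.trans (Finset.card_le_univ rem)) hy.1
          (hy.2.trans (Finset.card_le_univ rem)) hxy)
    simp only [Finset.mem_Icc] at hsF
    obtain ⟨T, hTsub, hTcard⟩ := Finset.exists_subset_card_eq hsF.2
    have hTne : T.Nonempty := Finset.card_pos.1 (hTcard ▸ hsF.1)
    obtain ⟨L, hL⟩ := ih (rem \ T) (Finset.sdiff_ssubset hTsub hTne)
    refine ⟨T :: L, hTsub, hTne, ?_, hL⟩
    intro t h1 h2 hne
    exact hTcard ▸ hbest t (Finset.mem_Icc.2 ⟨h1, h2⟩) (hTcard ▸ hne)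

lemma chain_core [DecidableEq α] (gt : ℕ → ℕ → Prop)
    (hirr : ∀ s, ¬ gt s s) (htrans : Transitive gt) :
    ∀ (L : List (Finset α)) (rem : Finset α), GreedySizeChain gt L rem →
      ∀ S : Finset α, S.Nonempty → S ⊆ rem →
        ¬ (∀ i ∈ S, ∀ T ∈ L.toFinset, i ∈ T → gt S.card T.card) := by
  intro L
  induction L with
  | nil =>
    intro rem hchain S hS hsub _
    rw [show rem = ∅ from hchain] at hsub
    exact hS.ne_empty (Finset.subset_empty.1 hsub)
  | cons T₀ L ih =>
    intro rem hchain S hS hsub hblock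
    obtain ⟨hT₀sub, hT₀ne, hbest, htail⟩ := hchain
    by_cases hint : (S ∩ T₀).Nonempty
    · obtain ⟨i, hi⟩ := hint
      rw [Finset.mem_inter] at hi
      have hgt : gt S.card T₀.card :=
        hblock i hi.1 T₀ (by simp) hi.2
      by_cases heq : S.card = T₀.card
      · exact hirr _ (heq ▸ hgt)
      · exact hirr _ (htrans hgt (hbest S.card (Finset.card_pos.2 hS)
          (Finset.card_le_card hsub) heq))
    · have hsub' : S ⊆ rem \ T₀ := by
        intro i hiS
        rw [Finset.mem_sdiff]
        exact ⟨hsub hiS, fun hiT => hint ⟨i, Finset.mem_inter.2 ⟨hiS, hiT⟩⟩⟩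
      exact ih (rem \ T₀) htail S hS hsub'
        (fun i hi T hT hiT => hblock i hi T (by simp [List.mem_toFinset] at hT ⊢; tauto) hiT)

lemma chain_partition [DecidableEq α] (gt : ℕ → ℕ → Prop) :
    ∀ (L : List (Finset α)) (rem : Finset α), GreedySizeChain gt L rem →
      (∀ T ∈ L.toFinset, T.Nonempty ∧ T ⊆ rem) ∧
      ∀ a ∈ rem, ∃! T, T ∈ L.toFinset ∧ a ∈ T := by
  intro L
  induction L with
  | nil =>
    intro rem hchain
    refine ⟨by simp, ?_⟩
    rw [show rem = ∅ from hchain]; simp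
  | cons T₀ L ih =>
    intro rem hchain
    obtain ⟨hT₀sub, hT₀ne, _, htail⟩ := hchain
    obtain ⟨ihmem, ihpart⟩ := ih (rem \ T₀) htail
    constructor
    · intro T hT
      rw [List.toFinset_cons, Finset.mem_insert] at hT
      rcases hT with rfl | hT
      · exact ⟨hT₀ne, hT₀sub⟩
      · exact ⟨(ihmem T hT).1, (ihmem T hT).2.trans (Finset.sdiff_subset)⟩
    · intro a ha
      by_cases haT₀ : a ∈ T₀
      · refine ⟨T₀, ⟨by simp, haT₀⟩, ?_⟩
        rintro T' ⟨hT', haT'⟩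
        rw [List.toFinset_cons, Finset.mem_insert] at hT'
        rcases hT' with rfl | hT'
        · rfl
        · exact absurd ((Finset.mem_sdiff.1 ((ihmem T' hT').2 haT')).2 haT₀) not_false
      · obtain ⟨T, ⟨hT, haT⟩, huniq⟩ := ihpart a (Finset.mem_sdiff.2 ⟨ha, haT₀⟩)
        refine ⟨T, ⟨by simp [List.mem_toFinset] at hT ⊢; tauto, haT⟩, ?_⟩
        rintro T' ⟨hT', haT'⟩
        rw [List.toFinset_cons, Finset.mem_insert] at hT'
        rcases hT' with rfl | hT'
        · exact absurd haT' haT₀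
        · exact huniq T' ⟨hT', haT'⟩

/-- Every anonymous hedonic game in which all agents share the same
strict ranking `gt` of coalition sizes has a nonempty core: the partition built by
repeatedly forming a coalition of the commonly most-preferred feasible size among
the remaining agents is core stable. -/
theorem stmt10 {α : Type*} [Fintype α] [DecidableEq α]
    (gt : ℕ → ℕ → Prop)
    (hirr : ∀ s, ¬ gt s s)
    (htrans : Transitive gt)
    (htotal : ∀ s t : ℕ, 1 ≤ s → s ≤ Fintype.card α → 1 ≤ t → t ≤ Fintype.card α →
      s ≠ t → gt s t ∨ gt t s) :
    (∃ π : Finset (Finset α),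
      ((∀ S ∈ π, S.Nonempty) ∧ ∀ a : α, ∃! S, S ∈ π ∧ a ∈ S) ∧ CoreStableAnon gt π) ∧
    ∀ L : List (Finset α), GreedySizeChain gt L Finset.univ →
      CoreStableAnon gt L.toFinset := by
  have hcore : ∀ L : List (Finset α), GreedySizeChain gt L Finset.univ →
      CoreStableAnon gt L.toFinset := by
    intro L hL
    rintro ⟨S, hS, hblock⟩
    exact chain_core gt hirr htrans L Finset.univ hL S hS (Finset.subset_univ S) hblock
  refine ⟨?_, hcore⟩
  obtain ⟨L, hL⟩ := chain_exists gt htrans htotal Finset.univ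
  obtain ⟨hmem, hpart⟩ := chain_partition gt L Finset.univ hL
  exact ⟨L.toFinset, ⟨fun S hS => (hmem S hS).1, fun a => hpart a (Finset.mem_univ a)⟩,
    hcore L hL⟩
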